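/- arXiv:1010.2022 — 4 statements merged into one kernel-verified Lean document; each statement's English description precedes it below -/
import Mathlib

section
/- Let n ≥ 1 and let H be a real symmetric positive semidefinite (2n)×(2n) matrix, with rows and columns indexed by the real coordinates x¹,…,xⁿ,y¹,…,yⁿ of ℂⁿ (so H plays the role of the real Hessian D²w of a real C² function w on a domain in ℂⁿ at a point where D²w ≥ 0). Define the complex n×n matrix A (the complex Hessian w_{j k̄}) by A_{jk} = (1/4)(H_{x^j x^k} + H_{y^j y^k}) + (√−1/4)(H_{x^j y^k} − H_{x^k y^j}). Then det H ≤ 8ⁿ · |det A|². -/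
open Matrix

lemma psd_det_nonneg {m : Type*} [Fintype m] [DecidableEq m]
    {Z : Matrix m m ℝ} (hZ : Z.PosSemidef) : 0 ≤ Z.det := by
  rw [hZ.isHermitian.det_eq_prod_eigenvalues]
  exact Finset.prod_nonneg fun i _ => hZ.eigenvalues_nonneg i

lemma det_one_add_ge {m : Type*} [Fintype m] [DecidableEq m]
    {Z : Matrix m m ℝ} (hZ : Z.PosSemidef) :
    2 ^ (Fintype.card m) * Real.sqrt Z.det ≤ (1 + Z).det := by
  have hher := hZ.isHermitian
  set U : Matrix m m ℝ := (hher.eigenvectorUnitary : Matrix m m ℝ) with hU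
  have hu : U * star U = 1 := (Matrix.mem_unitaryGroup_iff).mp hher.eigenvectorUnitary.2
  set D : Matrix m m ℝ := diagonal (RCLike.ofReal ∘ hher.eigenvalues) with hD
  have h1 : (1 : Matrix m m ℝ) + Z = U * (1 + D) * star U := by
    rw [mul_add, mul_one, add_mul, hu]
    congr 1
    exact hher.spectral_theorem
  have hdet1 : (1 + Z).det = ∏ i, (1 + hher.eigenvalues i) := by
    rw [h1, det_mul_right_comm, hu, one_mul, hD]
    rw [show (1 : Matrix m m ℝ) + diagonal (RCLike.ofReal ∘ hher.eigenvalues)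
        = diagonal (fun i => 1 + hher.eigenvalues i) by
      rw [← diagonal_one, diagonal_add]; rfl]
    rw [det_diagonal]
  have hdetZ : Z.det = ∏ i, hher.eigenvalues i := hher.det_eq_prod_eigenvalues
  rw [hdet1, hdetZ]
  have hsq : Real.sqrt (∏ i, hher.eigenvalues i) = ∏ i, Real.sqrt (hher.eigenvalues i) := by
    rw [show (∏ i, hher.eigenvalues i) = (∏ i, Real.sqrt (hher.eigenvalues i)) ^ 2 by
      rw [← Finset.prod_pow]
      exact Finset.prod_congr rfl fun i _ => (Real.sq_sqrt (hZ.eigenvalues_nonneg i)).symm]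
    exact Real.sqrt_sq (Finset.prod_nonneg fun i _ => Real.sqrt_nonneg _)
  rw [hsq, show (2:ℝ) ^ Fintype.card m = ∏ _i : m, (2:ℝ) by simp, ← Finset.prod_mul_distrib]
  refine Finset.prod_le_prod (fun i _ => by positivity) (fun i _ => ?_)
  nlinarith [Real.sq_sqrt (hZ.eigenvalues_nonneg i), sq_nonneg (Real.sqrt (hher.eigenvalues i) - 1)]
lemma det_add_ge_of_det_eq {m : Type*} [Fintype m] [DecidableEq m]
    {X Y : Matrix m m ℝ} (hX : X.PosSemidef) (hY : Y.PosSemidef)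
    (hdet : Y.det = X.det) :
    2 ^ (Fintype.card m) * X.det ≤ (X + Y).det := by
  rcases eq_or_ne X.det 0 with h0 | h0
  · rw [h0, mul_zero]
    exact psd_det_nonneg (hX.add hY)
  · obtain ⟨S, hSpsd, hSS⟩ : ∃ S : Matrix m m ℝ, S.PosSemidef ∧ S * S = X := by
      open scoped MatrixOrder in
      exact ⟨CFC.sqrt X, (CFC.sqrt_nonneg X).posSemidef, CFC.sqrt_mul_sqrt_self X hX.nonneg⟩
    have hdS : S.det * S.det = X.det := by rw [← det_mul, hSS]
    have hdSne : S.det ≠ 0 := fun h => h0 (by rw [← hdS, h, mul_zero])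
    have hunit : IsUnit S.det := isUnit_iff_ne_zero.mpr hdSne
    have hSinv : (S⁻¹)ᴴ = S⁻¹ := hSpsd.isHermitian.inv
    set Z := S⁻¹ * Y * S⁻¹ with hZdef
    have hZpsd : Z.PosSemidef := by
      have := hY.conjTranspose_mul_mul_same (S⁻¹)
      rwa [hSinv] at this
    have hXY : X + Y = S * (1 + Z) * S := by
      rw [mul_add, mul_one, add_mul, hSS, hZdef]
      congr 1
      rw [← mul_assoc, ← mul_assoc, mul_nonsing_inv _ hunit, one_mul, mul_assoc,
        nonsing_inv_mul _ hunit, mul_one]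
    have hdetZ : Z.det = 1 := by
      rw [hZdef, det_mul, det_mul, det_nonsing_inv, Ring.inverse_eq_inv', hdet, ← hdS]
      field_simp
    have key := det_one_add_ge hZpsd
    rw [hdetZ, Real.sqrt_one, mul_one] at key
    have hdSnonneg : 0 ≤ S.det := psd_det_nonneg hSpsd
    calc 2 ^ (Fintype.card m) * X.det = X.det * 2 ^ (Fintype.card m) := by ring
    _ ≤ X.det * (1 + Z).det := by
        apply mul_le_mul_of_nonneg_left key (le_of_lt ?_)
        cases' lt_or_eq_of_le (psd_det_nonneg hX) with h h
        · exact h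
        · exact absurd h.symm h0
    _ = S.det * (1 + Z).det * S.det := by rw [← hdS]; ring
    _ = (X + Y).det := by rw [hXY, det_mul, det_mul]

lemma det_fromBlocks_skew {n : ℕ} (X Y : Matrix (Fin n) (Fin n) ℝ) :
    (fromBlocks X Y (-Y) X).det
      = ‖(X.map Complex.ofReal + Complex.I • Y.map Complex.ofReal).det‖ ^ 2 := by
  set Xc : Matrix (Fin n) (Fin n) ℂ := X.map Complex.ofReal with hXc
  set Yc : Matrix (Fin n) (Fin n) ℂ := Y.map Complex.ofReal with hYc
  set M : Matrix (Fin n) (Fin n) ℂ := Xc + Complex.I • Yc with hM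
  set Mb : Matrix (Fin n) (Fin n) ℂ := Xc - Complex.I • Yc with hMb
  set L : Matrix (Fin n ⊕ Fin n) (Fin n ⊕ Fin n) ℂ :=
    fromBlocks 1 (Complex.I • 1) 0 1 with hL
  set R : Matrix (Fin n ⊕ Fin n) (Fin n ⊕ Fin n) ℂ :=
    fromBlocks 1 (-(Complex.I • 1)) 0 1 with hR
  have hmapneg : (-Y).map Complex.ofReal = -Yc := by ext i j; simp [hYc]
  have hKc : (fromBlocks X Y (-Y) X).map Complex.ofReal = fromBlocks Xc Yc (-Yc) Xc := by
    rw [fromBlocks_map, hmapneg]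
  have hLKR : L * (fromBlocks Xc Yc (-Yc) Xc) * R = fromBlocks Mb 0 (-Yc) M := by
    rw [hL, hR, fromBlocks_multiply, fromBlocks_multiply]
    refine fromBlocks_inj.mpr ⟨?_, ?_, ?_, ?_⟩
    · rw [hMb]
      simp [Matrix.smul_mul, Matrix.mul_smul, sub_eq_add_neg]
    · simp only [Matrix.smul_mul, Matrix.mul_smul, Matrix.one_mul, Matrix.mul_one,
        Matrix.neg_mul, Matrix.mul_neg, Matrix.zero_mul, Matrix.mul_zero, smul_smul,
        Complex.I_mul_I, neg_one_smul, neg_smul, smul_neg, neg_neg, smul_sub, smul_add,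
        add_zero, zero_add, sub_eq_add_neg, neg_add_rev, one_mul, mul_one]
      abel_nf
      simp [← hYc]
    · simp
    · rw [hM]
      simp [Matrix.smul_mul, Matrix.mul_smul, add_comm]
  have hdetL : L.det = 1 := by rw [hL, det_fromBlocks_zero₂₁]; simp
  have hdetR : R.det = 1 := by rw [hR, det_fromBlocks_zero₂₁]; simp
  have h1 : ((fromBlocks X Y (-Y) X).map Complex.ofReal).det = Mb.det * M.det := by
    rw [hKc, show (fromBlocks Xc Yc (-Yc) Xc).det = (L * (fromBlocks Xc Yc (-Yc) Xc) * R).det by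
      rw [det_mul, det_mul, hdetL, hdetR, one_mul, mul_one]]
    rw [hLKR, det_fromBlocks_zero₁₂]
  have h2 : Mb = M.map (starRingEnd ℂ) := by
    ext j k
    simp [hM, hMb, hXc, hYc, Matrix.map_apply, Matrix.add_apply, Matrix.sub_apply,
      Matrix.smul_apply, smul_eq_mul, map_add, _root_.map_mul, Complex.conj_ofReal, Complex.conj_I]
    ring
  have h3 : Mb.det = (starRingEnd ℂ) M.det := by
    rw [h2, ← RingHom.mapMatrix_apply, ← RingHom.map_det]
  have h4 : (((fromBlocks X Y (-Y) X).det : ℝ) : ℂ)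
      = ((fromBlocks X Y (-Y) X).map Complex.ofReal).det := by
    rw [show (fromBlocks X Y (-Y) X).map Complex.ofReal
        = Complex.ofRealHom.mapMatrix (fromBlocks X Y (-Y) X) from rfl, ← RingHom.map_det]
    rfl
  have h5 : (((fromBlocks X Y (-Y) X).det : ℝ) : ℂ) = ((Complex.normSq M.det : ℝ) : ℂ) := by
    rw [h4, h1, h3, mul_comm, Complex.mul_conj]
  have h6 : (fromBlocks X Y (-Y) X).det = Complex.normSq M.det := by exact_mod_cast h5
  rw [h6, ← Complex.sq_norm]

/-- Let `H` be a real symmetric positive semidefinite `(2n)×(2n)` matrix,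
whose rows and columns are indexed by the real coordinates `x¹,…,xⁿ,y¹,…,yⁿ` of `ℂⁿ`
(`Sum.inl`-indices correspond to `x`-coordinates, `Sum.inr`-indices to `y`-coordinates).
Let `A` be the complex `n×n` matrix with entries
`A j k = (1/4)(H_{xʲxᵏ} + H_{yʲyᵏ}) + (√-1/4)(H_{xʲyᵏ} - H_{xᵏyʲ})`.
Then `det H ≤ 8ⁿ · |det A|²`. -/
theorem det_real_hessian_le_pow_mul_abs_det_complex_hessian_sq
    (n : ℕ) (hn : 1 ≤ n)
    (H : Matrix (Fin n ⊕ Fin n) (Fin n ⊕ Fin n) ℝ)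
    (hHsymm : H.IsSymm) (hHpsd : H.PosSemidef)
    (A : Matrix (Fin n) (Fin n) ℂ)
    (hA : ∀ j k : Fin n, A j k =
      (((H (Sum.inl j) (Sum.inl k) + H (Sum.inr j) (Sum.inr k)) / 4 : ℝ) : ℂ)
        + Complex.I *
          (((H (Sum.inl j) (Sum.inr k) - H (Sum.inl k) (Sum.inr j)) / 4 : ℝ) : ℂ)) :
    H.det ≤ 8 ^ n * ‖A.det‖ ^ 2 := by
  classical
  set J : Matrix (Fin n ⊕ Fin n) (Fin n ⊕ Fin n) ℝ := fromBlocks 0 (-1) 1 0 with hJ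
  have hJH : Jᴴ = fromBlocks 0 1 (-1) 0 := by
    rw [hJ, fromBlocks_conjTranspose]; simp
  have hH'psd : (Jᴴ * H * J).PosSemidef := hHpsd.conjTranspose_mul_mul_same J
  have hJJ : Jᴴ * J = (1 : Matrix (Fin n ⊕ Fin n) (Fin n ⊕ Fin n) ℝ) := by
    rw [hJH, hJ, fromBlocks_multiply, ← fromBlocks_one]
    congr 1 <;> simp
  have hdetH' : (Jᴴ * H * J).det = H.det := by
    rw [det_mul, det_mul, mul_comm Jᴴ.det H.det, mul_assoc, ← det_mul, hJJ, det_one, mul_one]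
  set X : Matrix (Fin n) (Fin n) ℝ := H.toBlocks₁₁ + H.toBlocks₂₂ with hX
  set Y : Matrix (Fin n) (Fin n) ℝ := H.toBlocks₁₂ - H.toBlocks₂₁ with hY
  have hK : H + Jᴴ * H * J = fromBlocks X Y (-Y) X := by
    conv_lhs => rw [(fromBlocks_toBlocks H).symm]
    rw [hJH, hJ, fromBlocks_multiply, fromBlocks_multiply, fromBlocks_add]
    refine fromBlocks_inj.mpr ⟨?_, ?_, ?_, ?_⟩ <;> simp [hX, hY] <;> abel
  set M : Matrix (Fin n) (Fin n) ℂ :=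
    X.map Complex.ofReal + Complex.I • Y.map Complex.ofReal with hM
  have hMA : M = (4 : ℂ) • A := by
    ext j k
    have hs : H (Sum.inr j) (Sum.inl k) = H (Sum.inl k) (Sum.inr j) :=
      hHsymm.apply (Sum.inl k) (Sum.inr j)
    simp only [hM, hX, hY, Matrix.add_apply, Matrix.sub_apply, Matrix.smul_apply,
      Matrix.map_apply, smul_eq_mul, hA j k, toBlocks₁₁, toBlocks₁₂, toBlocks₂₁, toBlocks₂₂,
      of_apply, hs]
    push_cast
    ring
  have habs : (H + Jᴴ * H * J).det = 16 ^ n * ‖A.det‖ ^ 2 := by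
    rw [hK, det_fromBlocks_skew, ← hM, hMA, det_smul, Fintype.card_fin, norm_mul, norm_pow,
      Complex.norm_ofNat, mul_pow, ← pow_mul,
      show (16:ℝ) = 4 ^ 2 by norm_num, ← pow_mul, Nat.mul_comm]
  have key := det_add_ge_of_det_eq hHpsd hH'psd hdetH'
  rw [habs] at key
  have hcard : Fintype.card (Fin n ⊕ Fin n) = n + n := by simp
  rw [hcard] at key
  have h2 : (2:ℝ) ^ (n + n) = 4 ^ n := by rw [pow_add, ← mul_pow]; norm_num
  rw [h2] at key
  have h16 : (16:ℝ) ^ n = 4 ^ n * 4 ^ n := by rw [← mul_pow]; norm_num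
  have h4pos : (0:ℝ) < 4 ^ n := by positivity
  have step1 : H.det ≤ 4 ^ n * ‖A.det‖ ^ 2 := by
    rw [h16, mul_assoc] at key
    exact le_of_mul_le_mul_left key h4pos
  calc H.det ≤ 4 ^ n * ‖A.det‖ ^ 2 := step1
  _ ≤ 8 ^ n * ‖A.det‖ ^ 2 :=
      mul_le_mul_of_nonneg_right
        (pow_le_pow_left₀ (by norm_num) (by norm_num) n) (sq_nonneg _)
end

section
/- Let n ≥ 1 and let A and B be n×n complex Hermitian positive semidefinite matrices. Then the trace of A·B is a nonnegative real number, and det A · det B ≤ (trace(A·B)/n)ⁿ (all determinants and the trace here being real). -/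
open scoped ComplexOrder

/-- Trace of a Hermitian matrix equals the (real) sum of its eigenvalues. -/
lemma trace_eq_sum_eigenvalues' {n : ℕ} {M : Matrix (Fin n) (Fin n) ℂ}
    (hM : M.IsHermitian) : M.trace = ((∑ i, hM.eigenvalues i : ℝ) : ℂ) := by
  conv_lhs => rw [hM.spectral_theorem, Unitary.conjStarAlgAut_apply]
  rw [Matrix.trace_mul_cycle]
  rw [show (star (hM.eigenvectorUnitary : Matrix (Fin n) (Fin n) ℂ)) *
      (hM.eigenvectorUnitary : Matrix (Fin n) (Fin n) ℂ) = 1 from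
    Unitary.coe_star_mul_self _]
  rw [Matrix.one_mul, Matrix.trace_diagonal]
  push_cast
  rfl

/-- AM-GM for `n` nonnegative reals. -/
lemma prod_le_sum_div_pow {n : ℕ} (hn : 1 ≤ n) (z : Fin n → ℝ)
    (hz : ∀ i, 0 ≤ z i) : ∏ i, z i ≤ ((∑ i, z i) / n) ^ n := by
  have hn0 : (0 : ℝ) < n := by positivity
  have h := Real.geom_mean_le_arith_mean (Finset.univ : Finset (Fin n))
    (fun _ => 1) z (fun i _ => zero_le_one) (by simpa using hn0) (fun i _ => hz i)
  simp only [Real.rpow_one, one_mul, Finset.sum_const, Finset.card_univ,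
    Fintype.card_fin, nsmul_eq_mul, mul_one] at h
  have hprod : 0 ≤ ∏ i, z i := Finset.prod_nonneg fun i _ => hz i
  calc ∏ i, z i = ((∏ i, z i) ^ ((n : ℝ))⁻¹) ^ n := by
        rw [← Real.rpow_natCast (_ ^ _) n, ← Real.rpow_mul hprod,
          inv_mul_cancel₀ (ne_of_gt hn0), Real.rpow_one]
    _ ≤ ((∑ i, z i) / n) ^ n :=
        pow_le_pow_left₀ (Real.rpow_nonneg hprod _) h n

/-- Let `A` and `B` be `n×n` complex Hermitian positive semidefinite
matrices (`n ≥ 1`). Then the trace of `A·B` is a nonnegative real number, and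
`det A · det B ≤ (trace(A·B)/n)ⁿ` (all determinants and the trace being real). -/
theorem det_mul_det_le_trace_div_card_pow
    (n : ℕ) (hn : 1 ≤ n) (A B : Matrix (Fin n) (Fin n) ℂ)
    (hA : A.IsHermitian) (hApsd : A.PosSemidef)
    (hB : B.IsHermitian) (hBpsd : B.PosSemidef) :
    ((A * B).trace.im = 0 ∧ 0 ≤ (A * B).trace.re) ∧
      A.det.im = 0 ∧ B.det.im = 0 ∧
      A.det.re * B.det.re ≤ ((A * B).trace.re / n) ^ n := by
  classical
  set S := (open scoped MatrixOrder in CFC.sqrt A) with hSdef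
  have hS : S.PosSemidef := by open scoped MatrixOrder in exact Matrix.nonneg_iff_posSemidef.mp (CFC.sqrt_nonneg A)
  have hSS : S * S = A := by open scoped MatrixOrder in exact CFC.sqrt_mul_sqrt_self A hApsd.nonneg
  -- M = S * B * S is positive semidefinite
  have hM : (S * B * S).PosSemidef := by
    have := hBpsd.conjTranspose_mul_mul_same S
    rwa [hS.1.eq] at this
  set M := S * B * S with hMdef
  -- trace (A * B) = trace M
  have htr : (A * B).trace = M.trace := by
    rw [hMdef, Matrix.trace_mul_cycle, hSS]
  -- det M = det A * det B
  have hdet : M.det = A.det * B.det := by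
    rw [hMdef, Matrix.det_mul, Matrix.det_mul, ← hSS, Matrix.det_mul]
    ring
  have htrM : M.trace = ((∑ i, hM.1.eigenvalues i : ℝ) : ℂ) :=
    trace_eq_sum_eigenvalues' hM.1
  have hdetM : M.det = ((∏ i, hM.1.eigenvalues i : ℝ) : ℂ) := by
    rw [hM.1.det_eq_prod_eigenvalues]; push_cast; rfl
  have hdetA : A.det = ((∏ i, hA.eigenvalues i : ℝ) : ℂ) := by
    rw [hA.det_eq_prod_eigenvalues]; push_cast; rfl
  have hdetB : B.det = ((∏ i, hB.eigenvalues i : ℝ) : ℂ) := by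
    rw [hB.det_eq_prod_eigenvalues]; push_cast; rfl
  have hev : ∀ i, 0 ≤ hM.1.eigenvalues i := fun i => hM.eigenvalues_nonneg i
  refine ⟨⟨?_, ?_⟩, ?_, ?_, ?_⟩
  · rw [htr, htrM]; simp
  · rw [htr, htrM]; simp only [Complex.ofReal_re]
    exact Finset.sum_nonneg fun i _ => hev i
  · rw [hdetA, Complex.ofReal_im]
  · rw [hdetB, Complex.ofReal_im]
  · have key : ∏ i, hM.1.eigenvalues i ≤ ((∑ i, hM.1.eigenvalues i) / n) ^ n :=
      prod_le_sum_div_pow hn _ hev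
    have h1 : A.det.re * B.det.re = ∏ i, hM.1.eigenvalues i := by
      have h0 : ((∏ i, hM.1.eigenvalues i : ℝ) : ℂ)
          = (((∏ i, hA.eigenvalues i) * (∏ i, hB.eigenvalues i) : ℝ) : ℂ) := by
        rw [← hdetM, hdet, hdetA, hdetB, Complex.ofReal_mul]
      have h2 : (∏ i, hM.1.eigenvalues i)
          = (∏ i, hA.eigenvalues i) * (∏ i, hB.eigenvalues i) := by
        exact_mod_cast h0
      rw [hdetA, hdetB, Complex.ofReal_re, Complex.ofReal_re, h2]
    have h3 : (A * B).trace.re = ∑ i, hM.1.eigenvalues i := by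
      rw [htr, htrM, Complex.ofReal_re]
    rw [h1, h3]
    exact key
end

section
/- Moser-iteration sup bound: Let n ≥ 2 and κ = n/(n−1). There is a constant C > 0 depending only on n such that the following holds. Let (X, μ) be a measure space with μ(X) < ∞, let f : X → [0,∞) be measurable, let K ≥ 1 and let p ≥ 2 be a real number. Suppose that for every exponent q of the form q = p·κ^i with i ∈ ℕ, the L^q(μ) norm of f is finite and ‖f‖_{L^{qκ}(μ)} ≤ (Kq)^{1/q} · ‖f‖_{L^q(μ)}. Then ess sup_X f ≤ C · K^{n/p} · ‖f‖_{L^p(μ)}. -/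
open MeasureTheory

open Filter Real

private lemma geom_le_aux (r : ℝ) (h0 : 0 ≤ r) (h1 : r < 1) (m : ℕ) :
    ∑ i ∈ Finset.range m, r ^ i ≤ (1 - r)⁻¹ := by
  have := Summable.sum_le_tsum (Finset.range m) (fun i _ => pow_nonneg h0 i)
    (summable_geometric_of_lt_one h0 h1)
  rwa [tsum_geometric_of_lt_one h0 h1] at this

private lemma iter_prod_aux (N : ℕ → ENNReal) (s : ℕ → ℝ)
    (hstep : ∀ i, N (i + 1) ≤ ENNReal.ofReal (Real.exp (s i)) * N i) (m : ℕ) :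
    N m ≤ ENNReal.ofReal (Real.exp (∑ i ∈ Finset.range m, s i)) * N 0 := by
  induction m with
  | zero => simp
  | succ m ih =>
    calc N (m + 1) ≤ ENNReal.ofReal (Real.exp (s m)) * N m := hstep m
      _ ≤ ENNReal.ofReal (Real.exp (s m)) *
          (ENNReal.ofReal (Real.exp (∑ i ∈ Finset.range m, s i)) * N 0) :=
        mul_le_mul_right ih _
      _ = _ := by
        rw [← mul_assoc, ← ENNReal.ofReal_mul (Real.exp_nonneg _), ← Real.exp_add,
          Finset.sum_range_succ, add_comm]

private lemma sum_bound_aux (κ K p : ℝ) (hκ : 1 < κ) (hK : 1 ≤ K) (hp : 2 ≤ p) (m : ℕ) :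
    ∑ i ∈ Finset.range m, Real.log (K * (p * κ ^ i)) * (1 / (p * κ ^ i)) ≤
      Real.log K * ((1 - κ⁻¹)⁻¹ / p) +
        Real.sqrt 2 * (1 - (Real.sqrt κ)⁻¹)⁻¹ := by
  have hκ0 : (0 : ℝ) < κ := by linarith
  have hp0 : (0 : ℝ) < p := by linarith
  have hK0 : (0 : ℝ) < K := by linarith
  set σ : ℝ := Real.sqrt κ with hσdef
  have hσ1 : 1 < σ := by
    rw [hσdef, show (1:ℝ) = Real.sqrt 1 by simp]
    exact Real.sqrt_lt_sqrt (by norm_num) hκ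
  have hσ0 : (0 : ℝ) < σ := by linarith
  have hterm : ∀ i ∈ Finset.range m,
      Real.log (K * (p * κ ^ i)) * (1 / (p * κ ^ i)) ≤
        Real.log K * (p⁻¹ * (κ⁻¹) ^ i) + Real.sqrt 2 * (σ⁻¹) ^ i := by
    intro i _
    have hκi : (0 : ℝ) < κ ^ i := pow_pos hκ0 i
    have hq : (0 : ℝ) < p * κ ^ i := mul_pos hp0 hκi
    have h1q : 1 / (p * κ ^ i) = p⁻¹ * (κ⁻¹) ^ i := by
      rw [one_div, mul_inv, inv_pow]
    have hsqrtκi : Real.sqrt (κ ^ i) = σ ^ i := by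
      rw [← Real.sqrt_sq (pow_nonneg hσ0.le i)]
      congr 1
      rw [← pow_mul, mul_comm i 2, pow_mul, Real.sq_sqrt hκ0.le]
    have hsq : Real.sqrt (p * κ ^ i) = Real.sqrt p * σ ^ i := by
      rw [Real.sqrt_mul hp0.le, hsqrtκi]
    have hsq0 : (0 : ℝ) < Real.sqrt (p * κ ^ i) := Real.sqrt_pos.2 hq
    have hlog2 : Real.log (p * κ ^ i) ≤ 2 * Real.sqrt (p * κ ^ i) := by
      have h2 := Real.log_le_sub_one_of_pos hsq0
      have h3 : Real.log (Real.sqrt (p * κ ^ i)) = Real.log (p * κ ^ i) / 2 :=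
        Real.log_sqrt hq.le
      nlinarith [hsq0]
    have key2 : Real.log (p * κ ^ i) * (1 / (p * κ ^ i)) ≤ 2 / Real.sqrt (p * κ ^ i) := by
      have hqeq : p * κ ^ i = Real.sqrt (p * κ ^ i) * Real.sqrt (p * κ ^ i) :=
        (Real.mul_self_sqrt hq.le).symm
      rw [div_eq_mul_inv]
      calc Real.log (p * κ ^ i) * (1 / (p * κ ^ i))
          ≤ (2 * Real.sqrt (p * κ ^ i)) * (1 / (p * κ ^ i)) := by
            apply mul_le_mul_of_nonneg_right hlog2
            positivity
        _ = 2 * (Real.sqrt (p * κ ^ i))⁻¹ := by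
            rw [hqeq]; field_simp; rw [Real.sqrt_sq (Real.sqrt_nonneg _)]
    have key3 : 2 / Real.sqrt (p * κ ^ i) ≤ Real.sqrt 2 * (σ⁻¹) ^ i := by
      rw [hsq, div_le_iff₀ (by positivity)]
      have h4 : (σ⁻¹) ^ i * σ ^ i = 1 := by
        rw [← mul_pow, inv_mul_cancel₀ hσ0.ne', one_pow]
      have h5 : Real.sqrt 2 ≤ Real.sqrt p := Real.sqrt_le_sqrt hp
      have h6 : Real.sqrt 2 * Real.sqrt 2 = 2 := Real.mul_self_sqrt (by norm_num)
      calc (2:ℝ) = Real.sqrt 2 * Real.sqrt 2 := h6.symm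
        _ ≤ Real.sqrt 2 * Real.sqrt p := by
            apply mul_le_mul_of_nonneg_left h5 (Real.sqrt_nonneg 2)
        _ = Real.sqrt 2 * (σ⁻¹) ^ i * (Real.sqrt p * σ ^ i) := by
            have h7 : Real.sqrt 2 * (σ⁻¹) ^ i * (Real.sqrt p * σ ^ i) =
                Real.sqrt 2 * Real.sqrt p * ((σ⁻¹) ^ i * σ ^ i) := by ring
            rw [h7, h4, mul_one]
    have hlogmul : Real.log (K * (p * κ ^ i)) = Real.log K + Real.log (p * κ ^ i) :=
      Real.log_mul hK0.ne' hq.ne'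
    have hlogK : 0 ≤ Real.log K := Real.log_nonneg hK
    calc Real.log (K * (p * κ ^ i)) * (1 / (p * κ ^ i))
        = Real.log K * (1 / (p * κ ^ i)) + Real.log (p * κ ^ i) * (1 / (p * κ ^ i)) := by
          rw [hlogmul]; ring
      _ ≤ Real.log K * (1 / (p * κ ^ i)) + Real.sqrt 2 * (σ⁻¹) ^ i :=
          add_le_add le_rfl (key2.trans key3)
      _ = Real.log K * (p⁻¹ * (κ⁻¹) ^ i) + Real.sqrt 2 * (σ⁻¹) ^ i := by rw [h1q]
  calc ∑ i ∈ Finset.range m, Real.log (K * (p * κ ^ i)) * (1 / (p * κ ^ i))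
      ≤ ∑ i ∈ Finset.range m,
          (Real.log K * (p⁻¹ * (κ⁻¹) ^ i) + Real.sqrt 2 * (σ⁻¹) ^ i) :=
        Finset.sum_le_sum hterm
    _ = Real.log K * p⁻¹ * ∑ i ∈ Finset.range m, (κ⁻¹) ^ i +
        Real.sqrt 2 * ∑ i ∈ Finset.range m, (σ⁻¹) ^ i := by
        rw [Finset.sum_add_distrib, Finset.mul_sum, Finset.mul_sum]
        congr 1
        · exact Finset.sum_congr rfl fun i _ => by ring
    _ ≤ Real.log K * p⁻¹ * (1 - κ⁻¹)⁻¹ + Real.sqrt 2 * (1 - σ⁻¹)⁻¹ := by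
        apply add_le_add
        · apply mul_le_mul_of_nonneg_left
            (geom_le_aux _ (inv_nonneg.2 hκ0.le) (by rw [inv_lt_one_iff₀]; right; exact hκ) m)
          exact mul_nonneg (Real.log_nonneg hK) (inv_nonneg.2 hp0.le)
        · apply mul_le_mul_of_nonneg_left
            (geom_le_aux _ (inv_nonneg.2 hσ0.le) (by rw [inv_lt_one_iff₀]; right; exact hσ1) m)
          exact Real.sqrt_nonneg 2
    _ = Real.log K * ((1 - κ⁻¹)⁻¹ / p) + Real.sqrt 2 * (1 - σ⁻¹)⁻¹ := by ring

private lemma esssup_le_aux {X : Type} [MeasurableSpace X] {μ : Measure X}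
    {f : X → ℝ} (hf : Measurable f) (hf0 : ∀ x, 0 ≤ f x)
    {q : ℕ → ℝ} (hq1 : ∀ m, 1 ≤ q m) (hqtop : Tendsto q atTop atTop)
    {B : ENNReal} (hB : B ≠ ⊤)
    (hle : ∀ m, (∫⁻ x, ENNReal.ofReal (f x ^ q m) ∂μ) ^ (1 / q m) ≤ B) :
    essSup (fun x => ENNReal.ofReal (f x)) μ ≤ B := by
  set b := B.toReal with hb
  have hb0 : 0 ≤ b := ENNReal.toReal_nonneg
  have key : ∀ t : ℝ, b < t → μ {x | t ≤ f x} = 0 := by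
    intro t ht
    have ht0 : 0 < t := lt_of_le_of_lt hb0 ht
    have hBt : B < ENNReal.ofReal t := (ENNReal.lt_ofReal_iff_toReal_lt hB).2 ht
    have htne : ENNReal.ofReal t ≠ 0 := by
      simp only [ne_eq, ENNReal.ofReal_eq_zero, not_le]; exact ht0
    have htnetop : ENNReal.ofReal t ≠ ⊤ := ENNReal.ofReal_ne_top
    set c : ENNReal := B / ENNReal.ofReal t with hc
    have hcne : c ≠ ⊤ := (ENNReal.div_lt_top hB htne).ne
    have hct : c.toReal < 1 := by
      rw [hc, ENNReal.toReal_div, ENNReal.toReal_ofReal ht0.le, div_lt_one ht0]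
      exact ht
    have hcb : ∀ m, μ {x | t ≤ f x} ≤ c ^ q m := by
      intro m
      have hqm0 : 0 < q m := lt_of_lt_of_le one_pos (hq1 m)
      have hInt : (∫⁻ x, ENNReal.ofReal (f x ^ q m) ∂μ) ≤ B ^ q m := by
        have h1 := ENNReal.rpow_le_rpow (hle m) hqm0.le
        rwa [← ENNReal.rpow_mul, one_div, inv_mul_cancel₀ hqm0.ne', ENNReal.rpow_one] at h1
      have hmeas : AEMeasurable (fun x => ENNReal.ofReal (f x ^ q m)) μ :=
        (ENNReal.measurable_ofReal.comp
          ((Real.continuous_rpow_const hqm0.le).measurable.comp hf)).aemeasurable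
      have hcheb : ENNReal.ofReal t ^ q m * μ {x | t ≤ f x} ≤
          ∫⁻ x, ENNReal.ofReal (f x ^ q m) ∂μ := by
        calc ENNReal.ofReal t ^ q m * μ {x | t ≤ f x}
            ≤ ENNReal.ofReal (t ^ q m) *
              μ {x | ENNReal.ofReal (t ^ q m) ≤ ENNReal.ofReal (f x ^ q m)} := by
              rw [ENNReal.ofReal_rpow_of_pos ht0]
              refine mul_le_mul_right (measure_mono fun x hx => ?_) _
              exact ENNReal.ofReal_le_ofReal
                (Real.rpow_le_rpow ht0.le hx hqm0.le)
          _ ≤ _ := mul_meas_ge_le_lintegral₀ hmeas _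
      have hx0 : ENNReal.ofReal t ^ q m ≠ 0 := (ENNReal.rpow_pos (htne.bot_lt) htnetop).ne'
      have hxtop : ENNReal.ofReal t ^ q m ≠ ⊤ := ENNReal.rpow_ne_top_of_nonneg hqm0.le htnetop
      rw [hc, ENNReal.div_rpow_of_nonneg _ _ hqm0.le]
      rw [ENNReal.le_div_iff_mul_le (Or.inl hx0) (Or.inl hxtop), mul_comm]
      exact hcheb.trans hInt
    have htend : Tendsto (fun m => c ^ q m) atTop (nhds 0) := by
      have hrt : Tendsto (fun m => c.toReal ^ q m) atTop (nhds 0) :=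
        (tendsto_rpow_atTop_of_base_lt_one _ (by linarith [ENNReal.toReal_nonneg (a := c)]) hct).comp
          hqtop
      have heq : ∀ m, c ^ q m = ENNReal.ofReal (c.toReal ^ q m) := by
        intro m
        rw [← ENNReal.ofReal_rpow_of_nonneg ENNReal.toReal_nonneg (le_of_lt (lt_of_lt_of_le one_pos (hq1 m))),
          ENNReal.ofReal_toReal hcne]
      simp_rw [heq]
      have : Tendsto ENNReal.ofReal (nhds 0) (nhds (ENNReal.ofReal 0)) :=
        (ENNReal.continuous_ofReal).continuousAt
      simpa [Function.comp_def] using this.comp hrt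
    have : μ {x | t ≤ f x} ≤ 0 := ge_of_tendsto' htend hcb
    exact le_antisymm this (zero_le)
  have hnull : μ {x | b < f x} = 0 := by
    have hsub : {x | b < f x} ⊆ ⋃ k : ℕ, {x | b + ((k : ℝ) + 1)⁻¹ ≤ f x} := by
      intro x hx
      have h1 : 0 < f x - b := sub_pos.2 hx
      obtain ⟨k, hk⟩ := exists_nat_gt (f x - b)⁻¹
      refine Set.mem_iUnion.2 ⟨k, ?_⟩
      have h2 : ((k : ℝ) + 1)⁻¹ < f x - b := by
        rw [inv_lt_comm₀ (by positivity) h1]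
        exact hk.trans (by linarith)
      simp only [Set.mem_setOf_eq]
      linarith
    refine measure_mono_null hsub (measure_iUnion_null fun k => key _ ?_)
    have : (0:ℝ) < ((k : ℝ) + 1)⁻¹ := by positivity
    linarith
  have hae : ∀ᵐ x ∂μ, ENNReal.ofReal (f x) ≤ B := by
    rw [ae_iff]
    refine measure_mono_null (fun x hx => ?_) hnull
    simp only [Set.mem_setOf_eq, not_le] at hx
    exact (ENNReal.lt_ofReal_iff_toReal_lt hB).1 hx
  exact essSup_le_of_ae_le B hae

/-- Moser-iteration sup bound. Let `n ≥ 2` and `κ = n/(n−1)`. There is a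
constant `C > 0` depending only on `n` such that: for every finite measure space `(X, μ)`,
every measurable `f : X → [0,∞)`, every `K ≥ 1` and every real `p ≥ 2`, if for every
exponent `q = p·κⁱ` (`i ∈ ℕ`) the `L^q(μ)` norm of `f` is finite and
`‖f‖_{L^{qκ}(μ)} ≤ (Kq)^{1/q} ‖f‖_{L^q(μ)}`, then
`ess sup_X f ≤ C · K^{n/p} · ‖f‖_{L^p(μ)}`. -/
theorem moser_iteration_sup_bound (n : ℕ) (hn : 2 ≤ n) :
    ∃ C : ℝ, 0 < C ∧
      ∀ (X : Type) (_ : MeasurableSpace X) (μ : Measure X), μ Set.univ < ⊤ →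
      ∀ (f : X → ℝ), Measurable f → (∀ x, 0 ≤ f x) →
      ∀ (K p : ℝ), 1 ≤ K → 2 ≤ p →
      (∀ i : ℕ,
        (∫⁻ x, ENNReal.ofReal (f x ^ (p * ((n : ℝ)/((n : ℝ) - 1)) ^ i)) ∂μ) ≠ ⊤ ∧
        (∫⁻ x, ENNReal.ofReal
              (f x ^ (p * ((n : ℝ)/((n : ℝ) - 1)) ^ i * ((n : ℝ)/((n : ℝ) - 1)))) ∂μ) ^
            (1 / (p * ((n : ℝ)/((n : ℝ) - 1)) ^ i * ((n : ℝ)/((n : ℝ) - 1)))) ≤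
          ENNReal.ofReal ((K * (p * ((n : ℝ)/((n : ℝ) - 1)) ^ i)) ^
              (1 / (p * ((n : ℝ)/((n : ℝ) - 1)) ^ i))) *
            (∫⁻ x, ENNReal.ofReal (f x ^ (p * ((n : ℝ)/((n : ℝ) - 1)) ^ i)) ∂μ) ^
              (1 / (p * ((n : ℝ)/((n : ℝ) - 1)) ^ i))) →
      essSup (fun x => ENNReal.ofReal (f x)) μ ≤
        ENNReal.ofReal (C * K ^ ((n : ℝ) / p)) *
          (∫⁻ x, ENNReal.ofReal (f x ^ p) ∂μ) ^ (1 / p) := by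
  have hn2 : (2 : ℝ) ≤ (n : ℝ) := by exact_mod_cast hn
  have hn1 : (0 : ℝ) < (n : ℝ) - 1 := by linarith
  have hκ1 : 1 < (n : ℝ) / ((n : ℝ) - 1) := (one_lt_div hn1).2 (by linarith)
  refine ⟨Real.exp (Real.sqrt 2 * (1 - (Real.sqrt ((n : ℝ) / ((n : ℝ) - 1)))⁻¹)⁻¹),
    Real.exp_pos _, ?_⟩
  intro X mX μ hμ f hf hf0 K p hK hp h
  set κ : ℝ := (n : ℝ) / ((n : ℝ) - 1) with hκdef
  have hκ0 : (0 : ℝ) < κ := by linarith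
  have hp0 : (0 : ℝ) < p := by linarith
  have hK0 : (0 : ℝ) < K := by linarith
  have hκn : ((1 : ℝ) - κ⁻¹)⁻¹ = (n : ℝ) := by
    have hn0 : (n : ℝ) ≠ 0 := by linarith
    have h1 : (1 : ℝ) - ((n : ℝ) - 1) / (n : ℝ) = 1 / (n : ℝ) := by field_simp; ring
    rw [hκdef, inv_div, h1, one_div, inv_inv]
  -- the iteration step in exponential form
  have hstep : ∀ i,
      (∫⁻ x, ENNReal.ofReal (f x ^ (p * κ ^ (i + 1))) ∂μ) ^ (1 / (p * κ ^ (i + 1))) ≤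
        ENNReal.ofReal (Real.exp (Real.log (K * (p * κ ^ i)) * (1 / (p * κ ^ i)))) *
          (∫⁻ x, ENNReal.ofReal (f x ^ (p * κ ^ i)) ∂μ) ^ (1 / (p * κ ^ i)) := by
    intro i
    have hq : (0 : ℝ) < p * κ ^ i := mul_pos hp0 (pow_pos hκ0 i)
    have hKq : (0 : ℝ) < K * (p * κ ^ i) := mul_pos hK0 hq
    have e : p * κ ^ (i + 1) = p * κ ^ i * κ := by rw [pow_succ]; ring
    rw [e, ← Real.rpow_def_of_pos hKq]
    exact (h i).2
  have hiter := iter_prod_aux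
    (fun m => (∫⁻ x, ENNReal.ofReal (f x ^ (p * κ ^ m)) ∂μ) ^ (1 / (p * κ ^ m)))
    (fun i => Real.log (K * (p * κ ^ i)) * (1 / (p * κ ^ i))) hstep
  -- bound on the accumulated constant
  have hexp : ∀ m,
      Real.exp (∑ i ∈ Finset.range m, Real.log (K * (p * κ ^ i)) * (1 / (p * κ ^ i))) ≤
        Real.exp (Real.sqrt 2 * (1 - (Real.sqrt κ)⁻¹)⁻¹) * K ^ ((n : ℝ) / p) := by
    intro m
    have hs := sum_bound_aux κ K p hκ1 hK hp m
    rw [hκn] at hs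
    calc Real.exp (∑ i ∈ Finset.range m, Real.log (K * (p * κ ^ i)) * (1 / (p * κ ^ i)))
        ≤ Real.exp (Real.log K * ((n : ℝ) / p) +
            Real.sqrt 2 * (1 - (Real.sqrt κ)⁻¹)⁻¹) := Real.exp_le_exp.2 hs
      _ = Real.exp (Real.sqrt 2 * (1 - (Real.sqrt κ)⁻¹)⁻¹) * K ^ ((n : ℝ) / p) := by
          rw [Real.exp_add, Real.rpow_def_of_pos hK0, mul_comm]
  -- uniform norm bound
  have hBm : ∀ m,
      (∫⁻ x, ENNReal.ofReal (f x ^ (p * κ ^ m)) ∂μ) ^ (1 / (p * κ ^ m)) ≤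
        ENNReal.ofReal (Real.exp (Real.sqrt 2 * (1 - (Real.sqrt κ)⁻¹)⁻¹) *
            K ^ ((n : ℝ) / p)) *
          (∫⁻ x, ENNReal.ofReal (f x ^ p) ∂μ) ^ (1 / p) := by
    intro m
    have hiter' := hiter m
    simp only [pow_zero, mul_one] at hiter'
    exact hiter'.trans (mul_le_mul_left (ENNReal.ofReal_le_ofReal (hexp m)) _)
  -- finiteness of the right-hand side
  have hI0 : (∫⁻ x, ENNReal.ofReal (f x ^ p) ∂μ) ≠ ⊤ := by
    have h0 := (h 0).1
    simpa using h0
  have hBtop : ENNReal.ofReal (Real.exp (Real.sqrt 2 * (1 - (Real.sqrt κ)⁻¹)⁻¹) *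
        K ^ ((n : ℝ) / p)) *
      (∫⁻ x, ENNReal.ofReal (f x ^ p) ∂μ) ^ (1 / p) ≠ ⊤ :=
    ENNReal.mul_ne_top ENNReal.ofReal_ne_top
      (ENNReal.rpow_ne_top_of_nonneg (by positivity) hI0)
  exact esssup_le_aux hf hf0
    (fun m => by nlinarith [one_le_pow₀ (a := κ) (le_of_lt hκ1) (n := m)])
    ((tendsto_pow_atTop_atTop_of_one_lt hκ1).const_mul_atTop hp0)
    hBtop hBm
end

section
/- Iteration lemma for the moment bounds: Let n ≥ 2, κ = n/(n−1), K ≥ 1, and set p_i = 2·κ^i for i ∈ ℕ. There is a constant C > 0 depending only on n such that for every sequence (a_i)_{i∈ℕ} of nonnegative reals satisfying a_{i+1} ≤ (K·p_i)^{1/p_i} · (a_i + p_i) for all i ≥ 0, one has a_{k+1} ≤ C · K^{n/2} · (a_0 + p_k) for all k ≥ 0. -/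
open Finset

/-- Geometric sum bound. -/
lemma iter_geom_sum_le {r : ℝ} (h0 : 0 ≤ r) (h1 : r < 1) (m : ℕ) :
    ∑ i ∈ Finset.range m, r ^ i ≤ 1 / (1 - r) := by
  have hr : r ≠ 1 := ne_of_lt h1
  rw [geom_sum_eq hr]
  have h1r : 0 < 1 - r := by linarith
  have heq : (r ^ m - 1) / (r - 1) = (1 - r ^ m) / (1 - r) := by
    rw [← neg_div_neg_eq]; ring_nf
  rw [heq]
  gcongr
  · nlinarith [pow_nonneg h0 m]

lemma iter_sqrt_pow {x : ℝ} (hx : 0 ≤ x) (i : ℕ) :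
    Real.sqrt (x ^ i) = Real.sqrt x ^ i := by
  induction i with
  | zero => simp
  | succ m ih => rw [pow_succ, Real.sqrt_mul (pow_nonneg hx m), ih, pow_succ]

/-- Unfolding the recursion. -/
lemma iter_key (a M p : ℕ → ℝ) (ha0 : 0 ≤ a 0) (hp : ∀ i, 0 < p i) (hM : ∀ i, 1 ≤ M i)
    (hrec : ∀ i, a (i + 1) ≤ M i * (a i + p i)) (m : ℕ) :
    a (m + 1) ≤ (∏ i ∈ Finset.range (m + 1), M i) * (a 0 + ∑ i ∈ Finset.range (m + 1), p i) := by
  induction m with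
  | zero => simpa using hrec 0
  | succ m ih =>
    have h1 : a (m + 2) ≤ M (m + 1) * (a (m + 1) + p (m + 1)) := hrec (m + 1)
    have hP1 : (1:ℝ) ≤ ∏ i ∈ range (m + 1), M i := by
      calc (1:ℝ) = ∏ i ∈ range (m + 1), (1:ℝ) := by simp
        _ ≤ ∏ i ∈ range (m + 1), M i :=
          Finset.prod_le_prod (fun i _ => zero_le_one) (fun i _ => hM i)
    have hM1' := hM (m + 1)
    have hS : 0 ≤ a 0 + ∑ i ∈ range (m + 1), p i := by
      have : 0 ≤ ∑ i ∈ range (m + 1), p i := Finset.sum_nonneg fun i _ => (hp i).le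
      linarith
    calc a (m + 2) ≤ M (m + 1) * (a (m + 1) + p (m + 1)) := h1
      _ ≤ M (m + 1) * ((∏ i ∈ range (m + 1), M i) * (a 0 + ∑ i ∈ range (m + 1), p i)
            + p (m + 1)) := by
          apply mul_le_mul_of_nonneg_left (by linarith) (by linarith)
      _ ≤ M (m + 1) * ((∏ i ∈ range (m + 1), M i) * (a 0 + ∑ i ∈ range (m + 1), p i)
            + (∏ i ∈ range (m + 1), M i) * p (m + 1)) := by
          apply mul_le_mul_of_nonneg_left ?_ (by linarith)
          have := hp (m + 1)
          nlinarith
      _ = (∏ i ∈ range (m + 2), M i) * (a 0 + ∑ i ∈ range (m + 2), p i) := by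
          have e1 : ∏ i ∈ range (m + 2), M i = (∏ i ∈ range (m + 1), M i) * M (m + 1) :=
            Finset.prod_range_succ M (m + 1)
          have e2 : ∑ i ∈ range (m + 2), p i = (∑ i ∈ range (m + 1), p i) + p (m + 1) :=
            Finset.sum_range_succ p (m + 1)
          rw [e1, e2]; ring

/-- The main auxiliary lemma. -/
lemma iter_aux (n : ℕ) (hn : 2 ≤ n) (κ : ℝ) (hκdef : κ = (n : ℝ)/((n : ℝ) - 1))
    (K : ℝ) (hK : 1 ≤ K) (p M : ℕ → ℝ)
    (hpdef : ∀ i, p i = 2 * κ ^ i) (hMdef : ∀ i, M i = (K * p i) ^ (1 / p i))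
    (a : ℕ → ℝ) (ha : ∀ i, 0 ≤ a i)
    (hrec : ∀ i : ℕ, a (i + 1) ≤ M i * (a i + p i)) (k : ℕ) :
    a (k + 1) ≤ ((n : ℝ) * Real.exp (4 * n)) * K ^ ((n : ℝ) / 2) * (a 0 + p k) := by
  have hn2 : (2:ℝ) ≤ (n:ℝ) := by exact_mod_cast hn
  have hn1 : (0:ℝ) < (n:ℝ) - 1 := by linarith
  have hκ1 : 1 < κ := by rw [hκdef, lt_div_iff₀ hn1]; linarith
  have hκpos : 0 < κ := by linarith
  have hκinv : 1/κ = ((n:ℝ)-1)/(n:ℝ) := by rw [hκdef, one_div_div]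
  have hp2 : ∀ i, (2:ℝ) ≤ p i := by
    intro i
    have h1 : (1:ℝ) ≤ κ ^ i := one_le_pow₀ hκ1.le
    rw [hpdef]; nlinarith
  have hppos : ∀ i, (0:ℝ) < p i := fun i => lt_of_lt_of_le two_pos (hp2 i)
  have hKp1 : ∀ i, (1:ℝ) ≤ K * p i := fun i => by nlinarith [hp2 i, hppos i]
  have hM1 : ∀ i, 1 ≤ M i := by
    intro i
    rw [hMdef]
    exact Real.one_le_rpow (hKp1 i) (one_div_pos.mpr (hppos i)).le
  have key := iter_key a M p (ha 0) hppos hM1 hrec k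
  -- bounds on sums
  have sum_inv : ∀ m : ℕ, ∑ i ∈ range m, 1 / p i ≤ (n:ℝ)/2 := by
    intro m
    have h1 : ∀ i, 1 / p i = (1/2) * (1/κ) ^ i := by
      intro i
      rw [hpdef, one_div_pow]
      field_simp
    have h0 : (0:ℝ) ≤ 1/κ := by positivity
    have h1' : 1/κ < 1 := by rw [div_lt_one hκpos]; linarith
    calc ∑ i ∈ range m, 1 / p i = (1/2) * ∑ i ∈ range m, (1/κ)^i := by
          rw [Finset.mul_sum]; exact Finset.sum_congr rfl fun i _ => h1 i
      _ ≤ (1/2) * (1/(1 - 1/κ)) := by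
          apply mul_le_mul_of_nonneg_left (iter_geom_sum_le h0 h1' m) (by norm_num)
      _ = (n:ℝ)/2 := by
          rw [hκinv]
          have h2 : 1 - ((n:ℝ)-1)/(n:ℝ) = 1/(n:ℝ) := by field_simp; ring
          rw [h2, one_div_one_div]; ring
  -- log bound
  set r : ℝ := Real.sqrt (1/κ) with hrdef
  have hr0 : 0 ≤ r := Real.sqrt_nonneg _
  have hrlt : r ≤ 1 - 1/(2*(n:ℝ)) := by
    have h : (0:ℝ) < (n:ℝ) := by linarith
    have ht : ((n:ℝ)-1)/(n:ℝ) = 1 - 1/(n:ℝ) := by field_simp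
    have hz : 1/(2*(n:ℝ)) = (1/(n:ℝ))/2 := by
      rw [one_div, mul_inv]; ring
    have hsq : ((n:ℝ)-1)/(n:ℝ) ≤ (1 - 1/(2*(n:ℝ)))^2 := by
      rw [ht, hz]; nlinarith [sq_nonneg (1/(n:ℝ))]
    have hhalf : 1/(2*(n:ℝ)) ≤ 1/2 := one_div_le_one_div_of_le (by norm_num) (by linarith)
    calc r = Real.sqrt (((n:ℝ)-1)/(n:ℝ)) := by rw [hrdef, hκinv]
      _ ≤ Real.sqrt ((1 - 1/(2*(n:ℝ)))^2) := Real.sqrt_le_sqrt hsq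
      _ = 1 - 1/(2*(n:ℝ)) := Real.sqrt_sq (by linarith)
  have hr1 : r < 1 := by
    have : 0 < 1/(2*(n:ℝ)) := by positivity
    linarith
  have log_bound : ∀ i : ℕ, Real.log (p i) / p i ≤ 2 * r ^ i := by
    intro i
    have hpi := hppos i
    have hs : 0 < Real.sqrt (p i) := Real.sqrt_pos.mpr hpi
    have hlog : Real.log (p i) ≤ 2 * Real.sqrt (p i) := by
      have h1 : Real.log (Real.sqrt (p i)) ≤ Real.sqrt (p i) - 1 :=
        Real.log_le_sub_one_of_pos hs
      have h2 : Real.log (Real.sqrt (p i)) = Real.log (p i) / 2 := Real.log_sqrt hpi.le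
      linarith [h2 ▸ h1]
    have step1 : Real.log (p i) / p i ≤ 2 / Real.sqrt (p i) := by
      rw [div_le_div_iff₀ hpi hs]
      have : Real.sqrt (p i) * Real.sqrt (p i) = p i := Real.mul_self_sqrt hpi.le
      nlinarith
    have step2 : 2 / Real.sqrt (p i) ≤ 2 * r ^ i := by
      have hκi : κ ^ i ≤ p i := by
        rw [hpdef]
        have : (0:ℝ) < κ ^ i := by positivity
        linarith
      have hsk : Real.sqrt (κ ^ i) ≤ Real.sqrt (p i) := Real.sqrt_le_sqrt hκi
      have hskpos : 0 < Real.sqrt (κ ^ i) := Real.sqrt_pos.mpr (by positivity)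
      have hinv : 1 / Real.sqrt (p i) ≤ 1 / Real.sqrt (κ ^ i) :=
        one_div_le_one_div_of_le hskpos hsk
      have hri : 1 / Real.sqrt (κ ^ i) = r ^ i := by
        rw [hrdef, iter_sqrt_pow hκpos.le, ← one_div_pow]
        congr 1
        rw [one_div, ← Real.sqrt_inv, one_div]
      calc 2 / Real.sqrt (p i) = 2 * (1 / Real.sqrt (p i)) := by ring
        _ ≤ 2 * (1 / Real.sqrt (κ ^ i)) := by linarith
        _ = 2 * r ^ i := by rw [hri]
    linarith
  have sum_log : ∀ m : ℕ, ∑ i ∈ range m, Real.log (p i) / p i ≤ 4 * (n:ℝ) := by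
    intro m
    have h1 : ∑ i ∈ range m, Real.log (p i) / p i ≤ ∑ i ∈ range m, 2 * r ^ i :=
      Finset.sum_le_sum fun i _ => log_bound i
    have h2 : ∑ i ∈ range m, 2 * r ^ i = 2 * ∑ i ∈ range m, r ^ i := by
      rw [Finset.mul_sum]
    have h3 : ∑ i ∈ range m, r ^ i ≤ 1 / (1 - r) := iter_geom_sum_le hr0 hr1 m
    have h4 : 1 / (1 - r) ≤ 2 * (n:ℝ) := by
      rw [div_le_iff₀ (by linarith)]
      have h5 : 1/(2*(n:ℝ)) ≤ 1 - r := by linarith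
      have h6 : 2*(n:ℝ) * (1/(2*(n:ℝ))) = 1 := by field_simp
      nlinarith
    linarith
  -- bound on the product
  have prod_bound : ∀ m : ℕ, ∏ i ∈ range m, M i ≤ K ^ ((n:ℝ)/2) * Real.exp (4*(n:ℝ)) := by
    intro m
    have hKpos : (0:ℝ) < K := by linarith
    have hMexp : ∀ i, M i = Real.exp ((Real.log K) * (1/p i) + Real.log (p i) / p i) := by
      intro i
      rw [hMdef]
      rw [Real.rpow_def_of_pos (by nlinarith [hKp1 i] : (0:ℝ) < K * p i)]
      rw [Real.log_mul (by positivity) (hppos i).ne']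
      congr 1
      field_simp
    calc ∏ i ∈ range m, M i
        = Real.exp (∑ i ∈ range m, ((Real.log K) * (1/p i) + Real.log (p i) / p i)) := by
          rw [Real.exp_sum]; exact Finset.prod_congr rfl fun i _ => hMexp i
      _ = Real.exp ((Real.log K) * (∑ i ∈ range m, 1/p i)
            + ∑ i ∈ range m, Real.log (p i)/p i) := by
          rw [Finset.sum_add_distrib, Finset.mul_sum]
      _ ≤ Real.exp ((Real.log K) * ((n:ℝ)/2) + 4*(n:ℝ)) := by
          apply Real.exp_le_exp.mpr
          have hlK : 0 ≤ Real.log K := Real.log_nonneg hK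
          have := sum_inv m
          have := sum_log m
          nlinarith
      _ = K ^ ((n:ℝ)/2) * Real.exp (4*(n:ℝ)) := by
          rw [Real.exp_add, Real.rpow_def_of_pos hKpos]
  -- sum of the p's
  have sum_p : ∑ i ∈ range (k+1), p i ≤ (n:ℝ) * p k := by
    have hκne : κ ≠ 1 := hκ1.ne'
    have hgeom : ∑ i ∈ range (k+1), κ ^ i = (κ ^ (k+1) - 1)/(κ - 1) := geom_sum_eq hκne (k+1)
    have hκn : κ = (n:ℝ) * (κ - 1) := by rw [hκdef]; field_simp; ring
    have hκk : (0:ℝ) < κ ^ k := by positivity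
    have h1 : (κ ^ (k+1) - 1)/(κ - 1) ≤ (n:ℝ) * κ ^ k := by
      rw [div_le_iff₀ (by linarith : (0:ℝ) < κ - 1)]
      have h2 : κ ^ (k+1) = κ * κ ^ k := by rw [pow_succ]; ring
      nlinarith
    calc ∑ i ∈ range (k+1), p i = 2 * ∑ i ∈ range (k+1), κ ^ i := by
          rw [Finset.mul_sum]; exact Finset.sum_congr rfl fun i _ => hpdef i
      _ ≤ 2 * ((n:ℝ) * κ ^ k) := by
          apply mul_le_mul_of_nonneg_left _ (by norm_num)
          rw [hgeom]; exact h1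
      _ = (n:ℝ) * p k := by rw [hpdef]; ring
  -- final assembly
  have hPbound := prod_bound (k+1)
  have hKpow : (0:ℝ) < K ^ ((n:ℝ)/2) := Real.rpow_pos_of_pos (by linarith) _
  have hS0 : 0 ≤ a 0 + ∑ i ∈ range (k+1), p i := by
    have : 0 ≤ ∑ i ∈ range (k+1), p i := Finset.sum_nonneg fun i _ => (hppos i).le
    linarith [ha 0]
  have hpk := hppos k
  have ha0 := ha 0
  have hexp : (0:ℝ) < Real.exp (4*(n:ℝ)) := Real.exp_pos _
  calc a (k+1) ≤ (∏ i ∈ range (k+1), M i) * (a 0 + ∑ i ∈ range (k+1), p i) := key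
    _ ≤ (K ^ ((n:ℝ)/2) * Real.exp (4*(n:ℝ))) * (a 0 + ∑ i ∈ range (k+1), p i) :=
        mul_le_mul_of_nonneg_right hPbound hS0
    _ ≤ (K ^ ((n:ℝ)/2) * Real.exp (4*(n:ℝ))) * (a 0 + (n:ℝ) * p k) := by
        apply mul_le_mul_of_nonneg_left (by linarith) (by positivity)
    _ ≤ (K ^ ((n:ℝ)/2) * Real.exp (4*(n:ℝ))) * ((n:ℝ) * (a 0 + p k)) := by
        apply mul_le_mul_of_nonneg_left ?_ (by positivity)
        nlinarith
    _ = ((n : ℝ) * Real.exp (4 * n)) * K ^ ((n : ℝ) / 2) * (a 0 + p k) := by ring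

/-- iteration lemma for the moment bounds. Let `n ≥ 2`, `κ = n/(n−1)`,
`K ≥ 1`, and `p_i = 2·κⁱ`. There is a constant `C > 0` depending only on `n` such that for
every sequence `(a_i)` of nonnegative reals with `a_{i+1} ≤ (K·p_i)^{1/p_i} · (a_i + p_i)`
for all `i ≥ 0`, one has `a_{k+1} ≤ C · K^{n/2} · (a_0 + p_k)` for all `k ≥ 0`. -/
theorem iteration_lemma_moment_bounds (n : ℕ) (hn : 2 ≤ n) :
    ∃ C : ℝ, 0 < C ∧
      ∀ K : ℝ, 1 ≤ K →
      ∀ a : ℕ → ℝ, (∀ i, 0 ≤ a i) →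
      (∀ i : ℕ, a (i + 1) ≤
        (K * (2 * ((n : ℝ)/((n : ℝ) - 1)) ^ i)) ^ (1 / (2 * ((n : ℝ)/((n : ℝ) - 1)) ^ i)) *
          (a i + 2 * ((n : ℝ)/((n : ℝ) - 1)) ^ i)) →
      ∀ k : ℕ, a (k + 1) ≤ C * K ^ ((n : ℝ) / 2) * (a 0 + 2 * ((n : ℝ)/((n : ℝ) - 1)) ^ k) := by
  refine ⟨(n : ℝ) * Real.exp (4 * n), ?_, ?_⟩
  · have : (2:ℝ) ≤ (n:ℝ) := by exact_mod_cast hn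
    positivity
  · intro K hK a ha hrec k
    exact iter_aux n hn ((n : ℝ)/((n : ℝ) - 1)) rfl K hK
      (fun i => 2 * ((n : ℝ)/((n : ℝ) - 1)) ^ i)
      (fun i => (K * (2 * ((n : ℝ)/((n : ℝ) - 1)) ^ i)) ^ (1 / (2 * ((n : ℝ)/((n : ℝ) - 1)) ^ i)))
      (fun i => rfl) (fun i => rfl) a ha hrec k
end
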